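/- Strict ellipticity of the σ_k-type operator: Let 1 ≤ k ≤ n−1 and let λ ∈ ℝⁿ be such that η ∈ Γ_k, where η_i = Σ_{j=1}^n λ_j − λ_i. Define f_i = (1/k) · σ_k(η)^{(1/k)−1} · Σ_{l≠i} σ_{k−1}(η|l). Then Σ_{i=1}^n f_i ≥ ((n−1)/k)·(n−k+1)·C_n^{k−1}/(C_n^k)^{(k−1)/k}. -/

import Mathlib

/-- The `m`-th elementary symmetric function of `x ∈ ℝⁿ`. -/
noncomputable def esym (n m : ℕ) (x : Fin n → ℝ) : ℝ :=
  ∑ s ∈ Finset.univ.powersetCard m, ∏ i ∈ s, x i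

/-- `σ_m(x|p)`: the `m`-th elementary symmetric function of the vector obtained from `x`
by deleting the entry `x p`. -/
noncomputable def esymDel (n m : ℕ) (x : Fin n → ℝ) (p : Fin n) : ℝ :=
  ∑ s ∈ (Finset.univ.erase p).powersetCard m, ∏ i ∈ s, x i

/-- The Gårding cone `Γ_k ⊂ ℝⁿ`. -/
def GardingCone (n k : ℕ) : Set (Fin n → ℝ) :=
  {x | ∀ i : ℕ, 1 ≤ i → i ≤ k → 0 < esym n i x}

open Finset Polynomial

-- pairs identity
lemma sum_pc2 {ι : Type*} [DecidableEq ι] (s : Finset ι) (f : ι → ℝ) :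
    2 * ∑ A ∈ s.powersetCard 2, ∏ i ∈ A, f i
      = (∑ i ∈ s, f i) ^ 2 - ∑ i ∈ s, (f i) ^ 2 := by
  induction s using Finset.induction with
  | empty =>
      rw [Finset.powersetCard_eq_empty.mpr (by simp)]
      simp
  | @insert a s ha ih =>
      rw [Finset.powersetCard_succ_insert ha, Finset.sum_union, Finset.sum_image]
      · have h1 : ∑ t ∈ s.powersetCard 1, ∏ i ∈ insert a t, f i
            = f a * ∑ i ∈ s, f i := by
          rw [Finset.powersetCard_one, Finset.sum_map, Finset.mul_sum]
          refine Finset.sum_congr rfl fun i hi => ?_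
          have hia : a ∉ ({i} : Finset ι) := by
            simp only [Finset.mem_singleton]
            rintro rfl; exact ha hi
          simp [Finset.prod_insert hia, mul_comm]
        rw [Finset.sum_insert ha, Finset.sum_insert ha]
        rw [mul_add, ih, h1]
        ring
      · intro t ht u hu htu
        have hat : a ∉ t := fun h => ha ((Finset.mem_powersetCard.mp ht).1 h)
        have hau : a ∉ u := fun h => ha ((Finset.mem_powersetCard.mp hu).1 h)
        rw [← Finset.erase_insert hat, ← Finset.erase_insert hau, htu]
      · rw [Finset.disjoint_right]
        rintro A hA hA'
        obtain ⟨t, ht, rfl⟩ := Finset.mem_image.mp hA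
        exact ha ((Finset.mem_powersetCard.mp hA').1 (Finset.mem_insert_self a t))

-- complement reindexing
lemma sum_pc_compl {ι : Type*} [DecidableEq ι] (s : Finset ι) (k : ℕ) (hk : k ≤ s.card)
    (g : Finset ι → ℝ) :
    ∑ A ∈ s.powersetCard (s.card - k), g A = ∑ B ∈ s.powersetCard k, g (s \ B) := by
  refine Finset.sum_nbij' (fun A => s \ A) (fun B => s \ B) ?_ ?_ ?_ ?_ ?_
  · intro A hA
    obtain ⟨hAs, hAc⟩ := Finset.mem_powersetCard.mp hA
    refine Finset.mem_powersetCard.mpr ⟨Finset.sdiff_subset, ?_⟩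
    rw [Finset.card_sdiff_of_subset hAs, hAc]
    omega
  · intro B hB
    obtain ⟨hBs, hBc⟩ := Finset.mem_powersetCard.mp hB
    refine Finset.mem_powersetCard.mpr ⟨Finset.sdiff_subset, ?_⟩
    rw [Finset.card_sdiff_of_subset hBs, hBc]
  · intro A hA
    obtain ⟨hAs, _⟩ := Finset.mem_powersetCard.mp hA
    show s \ (s \ A) = A
    rw [Finset.sdiff_sdiff_self_left, Finset.inter_eq_right.mpr hAs]
  · intro B hB
    obtain ⟨hBs, _⟩ := Finset.mem_powersetCard.mp hB
    show s \ (s \ B) = B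
    rw [Finset.sdiff_sdiff_self_left, Finset.inter_eq_right.mpr hBs]
  · intro A hA
    show g A = g (s \ (s \ A))
    obtain ⟨hAs, _⟩ := Finset.mem_powersetCard.mp hA
    rw [Finset.sdiff_sdiff_self_left, Finset.inter_eq_right.mpr hAs]

lemma pair_prod {ι : Type*} [DecidableEq ι] (s : Finset ι) (f : ι → ℝ) {i j : ι}
    (hij : i ≠ j) (hi : i ∈ s) (hj : j ∈ s) :
    (∏ l ∈ s \ {i, j}, f l) * ∏ l ∈ s, f l
      = (∏ l ∈ s.erase i, f l) * ∏ l ∈ s.erase j, f l := by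
  have hD : s \ ({i, j} : Finset ι) = (s.erase i).erase j := by
    ext l
    simp only [Finset.mem_sdiff, Finset.mem_insert, Finset.mem_singleton, Finset.mem_erase]
    tauto
  have hji : j ∈ s.erase i := Finset.mem_erase.mpr ⟨hij.symm, hj⟩
  have e1 : f j * ∏ l ∈ (s.erase i).erase j, f l = ∏ l ∈ s.erase i, f l :=
    Finset.mul_prod_erase _ f hji
  have e2 : f i * ∏ l ∈ s.erase i, f l = ∏ l ∈ s, f l :=
    Finset.mul_prod_erase _ f hi
  have hij' : i ∈ s.erase j := Finset.mem_erase.mpr ⟨hij, hi⟩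
  have e3 : f i * ∏ l ∈ (s.erase j).erase i, f l = ∏ l ∈ s.erase j, f l :=
    Finset.mul_prod_erase _ f hij'
  have hDD : (s.erase i).erase j = (s.erase j).erase i := by
    rw [Finset.erase_right_comm]
  rw [hD, ← e2, ← e1, ← e3, ← hDD]
  ring

lemma newton_base {ι : Type*} [DecidableEq ι] (s : Finset ι) (f : ι → ℝ) (N : ℕ)
    (hN : s.card = N) (h2 : 2 ≤ N) :
    2 * N * ((∑ A ∈ s.powersetCard (N - 2), ∏ i ∈ A, f i) * ∏ i ∈ s, f i)
      ≤ ((N : ℝ) - 1) * (∑ A ∈ s.powersetCard (N - 1), ∏ i ∈ A, f i) ^ 2 := by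
  set P : ι → ℝ := fun i => ∏ l ∈ s.erase i, f l with hP
  have h1 : ∑ A ∈ s.powersetCard (N - 1), ∏ i ∈ A, f i = ∑ i ∈ s, P i := by
    rw [← hN, sum_pc_compl s 1 (by omega), Finset.powersetCard_one, Finset.sum_map]
    refine Finset.sum_congr rfl fun i hi => ?_
    simp only [Function.Embedding.coeFn_mk]
    rw [← Finset.erase_eq]
  have h2' : (∑ A ∈ s.powersetCard (N - 2), ∏ i ∈ A, f i) * ∏ i ∈ s, f i
      = ∑ B ∈ s.powersetCard 2, ∏ i ∈ B, P i := by
    rw [← hN, sum_pc_compl s 2 (by omega), Finset.sum_mul]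
    refine Finset.sum_congr rfl fun B hB => ?_
    obtain ⟨hBs, hBc⟩ := Finset.mem_powersetCard.mp hB
    obtain ⟨i, j, hij, rfl⟩ := Finset.card_eq_two.mp hBc
    have hi : i ∈ s := hBs (by simp)
    have hj : j ∈ s := hBs (by simp)
    rw [pair_prod s f hij hi hj]
    rw [Finset.prod_insert (by simpa using hij), Finset.prod_singleton]
  have h3 := sum_pc2 s P
  have h4 : (∑ i ∈ s, P i) ^ 2 ≤ (N : ℝ) * ∑ i ∈ s, (P i) ^ 2 := by
    have := sq_sum_le_card_mul_sum_sq (s := s) (f := P)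
    rw [hN] at this
    exact_mod_cast this
  rw [h1, h2']
  nlinarith [h3, h4]

-- bridge: multiset version
lemma esymm_toFun (M : Multiset ℝ) :
    ∀ i, M.esymm i = ∑ A ∈ (Finset.univ : Finset (Fin M.toList.length)).powersetCard i,
      ∏ l ∈ A, M.toList.get l := by
  intro i
  have key : (Finset.univ : Finset (Fin M.toList.length)).val.map M.toList.get = M := by
    have : (Finset.univ : Finset (Fin M.toList.length)).val
        = (List.finRange M.toList.length : Multiset (Fin M.toList.length)) := rfl
    rw [this]
    rw [show ((List.finRange M.toList.length : List (Fin M.toList.length)) : Multiset (Fin M.toList.length)).map M.toList.get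
      = ((List.finRange M.toList.length).map M.toList.get : List ℝ) from rfl]
    rw [List.map_get_finRange]
    exact M.coe_toList
  rw [← Finset.esymm_map_val, key]

lemma newton_base_M (M : Multiset ℝ) (N : ℕ) (hN : Multiset.card M = N) (h2 : 2 ≤ N) :
    2 * N * (M.esymm (N - 2) * M.esymm N)
      ≤ ((N : ℝ) - 1) * (M.esymm (N - 1)) ^ 2 := by
  have hlen : M.toList.length = N := by rw [Multiset.length_toList, hN]
  have hcard : (Finset.univ : Finset (Fin M.toList.length)).card = N := by
    simp [hlen]
  have hb := newton_base (Finset.univ : Finset (Fin M.toList.length)) M.toList.get N hcard h2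
  rw [esymm_toFun, esymm_toFun, esymm_toFun]
  have hself : M.esymm N = ∏ i ∈ (Finset.univ : Finset (Fin M.toList.length)), M.toList.get i := by
    rw [esymm_toFun]
    rw [← hcard, Finset.powersetCard_self, Finset.sum_singleton]
  rw [esymm_toFun] at hself
  rw [hself]
  exact hb

lemma chooseid (n i : ℕ) : (n + 1).choose i * (n + 1 - i) = (n + 1) * n.choose i := by
  rw [← Nat.choose_succ_right_eq, ← Nat.add_one_mul_choose_eq]

-- key derivative step
lemma deriv_step (n : ℕ) (M : Multiset ℝ) (hM : Multiset.card M = n + 1) :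
    ∃ T : Multiset ℝ, Multiset.card T = n ∧
      ∀ i, i ≤ n → ((n : ℝ) + 1) * T.esymm i = ((n + 1 - i : ℕ) : ℝ) * M.esymm i := by
  set p : ℝ[X] := (M.map fun r => X - C r).prod with hp
  have hmonic : p.Monic :=
    monic_multiset_prod_of_monic _ _ fun r _ => monic_X_sub_C r
  have hroots : p.roots = M := roots_multiset_prod_X_sub_C M
  have hdeg : p.natDegree = n + 1 := by
    rw [hp, natDegree_multiset_prod_of_monic _ (fun r hr => by
      obtain ⟨a, _, rfl⟩ := Multiset.mem_map.mp hr; exact monic_X_sub_C a)]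
    simp [Multiset.map_map, Function.comp, natDegree_X_sub_C, hM]
    omega
  set q : ℝ[X] := derivative p with hq
  have hcard1 : Multiset.card p.roots = p.natDegree := by rw [hroots, hdeg, hM]
  have hle1 : n ≤ Multiset.card q.roots := by
    have := p.card_roots_le_derivative
    rw [hcard1, hdeg, ← hq] at this
    omega
  have hle2 : Multiset.card q.roots ≤ q.natDegree := q.card_roots'
  have hle3 : q.natDegree ≤ n := by
    have := natDegree_derivative_le p
    rw [hdeg, ← hq] at this
    omega
  have hqdeg : q.natDegree = n := by omega
  have hqcard : Multiset.card q.roots = q.natDegree := by omega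
  have hlead : q.leadingCoeff = (n : ℝ) + 1 := by
    rw [leadingCoeff, hqdeg, hq, coeff_derivative, ← hdeg, hmonic.coeff_natDegree]
    push_cast; ring
  refine ⟨q.roots, by omega, fun i hi => ?_⟩
  have hqc := Polynomial.coeff_eq_esymm_roots_of_card hqcard
    (k := n - i) (by omega)
  rw [hqdeg] at hqc
  have hpc := Polynomial.coeff_eq_esymm_roots_of_card hcard1
    (k := n - i + 1) (by omega)
  rw [hdeg, hroots] at hpc
  have hd : q.coeff (n - i) = p.coeff (n - i + 1) * (((n - i : ℕ) : ℝ) + 1) := by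
    rw [hq, coeff_derivative]
  rw [hqc, hpc, hlead, hmonic.leadingCoeff] at hd
  have hni : n - (n - i) = i := by omega
  have hni2 : n + 1 - (n - i + 1) = i := by omega
  rw [hni, hni2] at hd
  have hcast : ((n - i : ℕ) : ℝ) + 1 = ((n + 1 - i : ℕ) : ℝ) := by
    push_cast [Nat.cast_sub hi, Nat.cast_sub (by omega : i ≤ n + 1)]; ring
  have h2 : ((n : ℝ) + 1) * q.roots.esymm i * (-1) ^ i
      = ((n + 1 - i : ℕ) : ℝ) * M.esymm i * (-1) ^ i := by
    linear_combination hd + ((-1 : ℝ) ^ i * M.esymm i) * hcast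
  exact mul_right_cancel₀ (pow_ne_zero i (by norm_num)) h2

lemma newtonM : ∀ (n : ℕ) (M : Multiset ℝ), Multiset.card M = n → ∀ m : ℕ, 1 ≤ m → m + 1 ≤ n →
    M.esymm (m - 1) * M.esymm (m + 1) * ((n.choose m : ℝ)) ^ 2
      ≤ (M.esymm m) ^ 2 * ((n.choose (m - 1) : ℝ) * (n.choose (m + 1) : ℝ)) := by
  intro n
  induction n with
  | zero => intro M hM m hm1 hmn; omega
  | succ n ih =>
    intro M hM m hm1 hmn
    rcases eq_or_lt_of_le hmn with heq | hlt
    · -- base case : m = n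
      have hmn' : m = n := by omega
      subst hmn'
      have hn1 : 1 ≤ m := hm1
      have hbase := newton_base_M M (m + 1) hM (by omega)
      have hC : 2 * (m + 1).choose (m - 1) = (m + 1) * m := by
        have hsymm : (m + 1).choose (m + 1 - 2) = (m + 1).choose 2 :=
          Nat.choose_symm (by omega)
        have hd : 2 ∣ (m + 1) * m := by
          rw [mul_comm]
          exact (Nat.even_mul_succ_self m).two_dvd
        have h := Nat.choose_two_right (m + 1)
        rw [Nat.succ_sub_one] at h
        have hc2 : (m + 1).choose 2 * 2 = (m + 1) * m := by
          rw [h]; exact Nat.div_mul_cancel hd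
        rw [show m - 1 = m + 1 - 2 by omega, hsymm]
        omega
      have hCr : (2 : ℝ) * ((m + 1).choose (m - 1) : ℝ) = ((m : ℝ) + 1) * m := by
        exact_mod_cast congrArg (Nat.cast : ℕ → ℝ) hC
      rw [Nat.choose_succ_self_right, Nat.choose_self]
      have h1 : m + 1 - 2 = m - 1 := by omega
      have h2 : m + 1 - 1 = m := by omega
      rw [h1, h2] at hbase
      push_cast at hbase ⊢
      nlinarith [hbase, hCr, sq_nonneg (M.esymm m), mul_le_mul_of_nonneg_left hbase
        (show (0:ℝ) ≤ (m : ℝ) + 1 by positivity)]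
    · -- inductive step
      have hmn2 : m + 1 ≤ n := by omega
      obtain ⟨T, hT, hk⟩ := deriv_step n M hM
      have ihh := ih T hT m hm1 hmn2
      set ν : ℝ := (n : ℝ) + 1 with hν
      set a : ℝ := ((n + 1 - (m - 1) : ℕ) : ℝ) with ha
      set b : ℝ := ((n + 1 - m : ℕ) : ℝ) with hb
      set c : ℝ := ((n + 1 - (m + 1) : ℕ) : ℝ) with hc
      have k1 := hk (m - 1) (by omega)
      have k2 := hk m (by omega)
      have k3 := hk (m + 1) (by omega)
      have hapos : (0 : ℝ) < a := by rw [ha]; exact_mod_cast Nat.pos_of_ne_zero (by omega)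
      have hbpos : (0 : ℝ) < b := by rw [hb]; exact_mod_cast Nat.pos_of_ne_zero (by omega)
      have hcpos : (0 : ℝ) < c := by rw [hc]; exact_mod_cast Nat.pos_of_ne_zero (by omega)
      have hνpos : (0 : ℝ) < ν := by positivity
      have c1 : ((n + 1).choose m : ℝ) * b = ν * (n.choose m : ℝ) := by
        rw [hb, hν]
        exact_mod_cast congrArg (Nat.cast : ℕ → ℝ) (chooseid n m)
      have c2 : ((n + 1).choose (m - 1) : ℝ) * a = ν * (n.choose (m - 1) : ℝ) := by
        rw [ha, hν]
        exact_mod_cast congrArg (Nat.cast : ℕ → ℝ) (chooseid n (m - 1))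
      have c3 : ((n + 1).choose (m + 1) : ℝ) * c = ν * (n.choose (m + 1) : ℝ) := by
        rw [hc, hν]
        exact_mod_cast congrArg (Nat.cast : ℕ → ℝ) (chooseid n (m + 1))
      have ih2 : (a * M.esymm (m - 1)) * (c * M.esymm (m + 1)) * ((n.choose m : ℝ)) ^ 2
          ≤ (b * M.esymm m) ^ 2 * ((n.choose (m - 1) : ℝ) * (n.choose (m + 1) : ℝ)) := by
        calc (a * M.esymm (m - 1)) * (c * M.esymm (m + 1)) * ((n.choose m : ℝ)) ^ 2
            = ν ^ 2 * (T.esymm (m - 1) * T.esymm (m + 1) * ((n.choose m : ℝ)) ^ 2) := by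
              rw [← k1, ← k3]; ring
          _ ≤ ν ^ 2 * ((T.esymm m) ^ 2 * ((n.choose (m - 1) : ℝ) * (n.choose (m + 1) : ℝ))) :=
              mul_le_mul_of_nonneg_left ihh (by positivity)
          _ = (b * M.esymm m) ^ 2 * ((n.choose (m - 1) : ℝ) * (n.choose (m + 1) : ℝ)) := by
              rw [← k2]; ring
      have hpos : (0 : ℝ) < a * c * b ^ 2 := by positivity
      refine le_of_mul_le_mul_right ?_ hpos
      calc M.esymm (m - 1) * M.esymm (m + 1) * (((n + 1).choose m : ℝ)) ^ 2 * (a * c * b ^ 2)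
          = ((a * M.esymm (m - 1)) * (c * M.esymm (m + 1)) * ((n.choose m : ℝ)) ^ 2) * ν ^ 2 := by
            linear_combination (M.esymm (m - 1) * M.esymm (m + 1) * a * c *
              (((n + 1).choose m : ℝ) * b + ν * (n.choose m : ℝ))) * c1
        _ ≤ ((b * M.esymm m) ^ 2 * ((n.choose (m - 1) : ℝ) * (n.choose (m + 1) : ℝ))) * ν ^ 2 :=
            mul_le_mul_of_nonneg_right ih2 (by positivity)
        _ = (M.esymm m) ^ 2 * (((n + 1).choose (m - 1) : ℝ) * ((n + 1).choose (m + 1) : ℝ))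
              * (a * c * b ^ 2) := by
            linear_combination (-((M.esymm m) ^ 2 * b ^ 2 * (((n + 1).choose (m + 1) : ℝ) * c))) * c2
              - ((M.esymm m) ^ 2 * b ^ 2 * ν * ((n.choose (m - 1) : ℝ))) * c3

lemma esym_esymm (n i : ℕ) (x : Fin n → ℝ) :
    (Multiset.map x Finset.univ.val).esymm i = esym n i x := by
  rw [Finset.esymm_map_val]; rfl

lemma newton_esym (n m : ℕ) (hm1 : 1 ≤ m) (hmn : m + 1 ≤ n) (x : Fin n → ℝ) :
    esym n (m - 1) x * esym n (m + 1) x * ((n.choose m : ℝ)) ^ 2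
      ≤ (esym n m x) ^ 2 * ((n.choose (m - 1) : ℝ) * (n.choose (m + 1) : ℝ)) := by
  have h := newtonM n (Multiset.map x Finset.univ.val) (by simp) m hm1 hmn
  rwa [esym_esymm, esym_esymm, esym_esymm] at h

lemma esym_zero (n : ℕ) (x : Fin n → ℝ) : esym n 0 x = 1 := by
  simp [esym]

lemma maclaurin (n k : ℕ) (hk1 : 1 ≤ k) (hkn : k + 1 ≤ n) (x : Fin n → ℝ)
    (hpos : ∀ i : ℕ, 1 ≤ i → i ≤ k → 0 < esym n i x) :
    (n.choose (k - 1) : ℝ) * ((esym n k x / (n.choose k : ℝ)) ^ (((k : ℝ) - 1) / (k : ℝ)))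
      ≤ esym n (k - 1) x := by
  set p : ℕ → ℝ := fun i => esym n i x / (n.choose i : ℝ) with hp
  have hchoosepos : ∀ i : ℕ, i ≤ k → (0 : ℝ) < (n.choose i : ℝ) := fun i hi => by
    exact_mod_cast Nat.choose_pos (by omega)
  have hppos : ∀ i : ℕ, i ≤ k → 0 < p i := by
    intro i hi
    rcases Nat.eq_zero_or_pos i with rfl | hi1
    · simp [hp, esym_zero]
    · exact div_pos (hpos i hi1 hi) (hchoosepos i hi)
  have pnewton : ∀ m : ℕ, 1 ≤ m → m + 1 ≤ k → p (m - 1) * p (m + 1) ≤ (p m) ^ 2 := by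
    intro m hm1 hmk
    have hne := newton_esym n m hm1 (by omega) x
    show esym n (m-1) x / _ * (esym n (m+1) x / _) ≤ _
    rw [div_mul_div_comm, div_pow, div_le_div_iff₀
      (mul_pos (hchoosepos (m - 1) (by omega)) (hchoosepos (m + 1) hmk))
      (pow_pos (hchoosepos m (by omega)) 2)]
    linarith [hne]
  have chain : ∀ m : ℕ, m + 1 ≤ k → (p (m + 1)) ^ m ≤ (p m) ^ (m + 1) := by
    intro m
    induction m with
    | zero => intro _; simp [hp, esym_zero]
    | succ m ihm =>
      intro hm2
      have ih' := ihm (by omega)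
      have hN := pnewton (m + 1) (by omega) (by omega)
      rw [show m + 1 - 1 = m from rfl] at hN
      have hp1 : 0 < p (m + 1) := hppos _ (by omega)
      have hp2 : 0 < p (m + 2) := hppos _ (by omega)
      have hp0 : 0 < p m := hppos _ (by omega)
      have h3 : p m ^ (m + 1) * p (m + 2) ^ (m + 1) ≤ p (m + 1) ^ (2 * m + 2) := by
        calc p m ^ (m + 1) * p (m + 2) ^ (m + 1) = (p m * p (m + 2)) ^ (m + 1) := by
              rw [mul_pow]
          _ ≤ (p (m + 1) ^ 2) ^ (m + 1) :=
              pow_le_pow_left₀ (by positivity) hN (m + 1)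
          _ = p (m + 1) ^ (2 * m + 2) := by rw [← pow_mul]; ring_nf
      have h2 : p (m + 1) ^ m * p (m + 2) ^ (m + 1)
          ≤ p m ^ (m + 1) * p (m + 2) ^ (m + 1) :=
        mul_le_mul_of_nonneg_right ih' (by positivity)
      have h5 : p (m + 2) ^ (m + 1) * p (m + 1) ^ m
          ≤ p (m + 1) ^ (m + 2) * p (m + 1) ^ m := by
        calc p (m + 2) ^ (m + 1) * p (m + 1) ^ m
            = p (m + 1) ^ m * p (m + 2) ^ (m + 1) := by ring
          _ ≤ p (m + 1) ^ (2 * m + 2) := h2.trans h3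
          _ = p (m + 1) ^ (m + 2) * p (m + 1) ^ m := by rw [← pow_add]; ring_nf
      exact le_of_mul_le_mul_right h5 (by positivity)
  have hfinal : (p k) ^ (k - 1) ≤ (p (k - 1)) ^ k := by
    have := chain (k - 1) (by omega)
    rwa [show k - 1 + 1 = k by omega] at this
  -- rpow step
  set u : ℝ := p (k - 1) with hu
  set v : ℝ := p k with hv
  have hupos : 0 < u := hppos _ (by omega)
  have hvpos : 0 < v := hppos _ le_rfl
  have hK : (0 : ℝ) < (k : ℝ) := by exact_mod_cast hk1
  have hexp : ((k : ℝ) - 1) / (k : ℝ) = ((k - 1 : ℕ) : ℝ) * ((k : ℝ))⁻¹ := by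
    rw [Nat.cast_sub hk1]
    push_cast
    ring
  have hrpow : v ^ (((k : ℝ) - 1) / (k : ℝ)) ≤ u := by
    rw [hexp, Real.rpow_mul hvpos.le, Real.rpow_natCast]
    calc (v ^ (k - 1 : ℕ) : ℝ) ^ (((k : ℝ))⁻¹)
        ≤ (u ^ (k : ℕ)) ^ (((k : ℝ))⁻¹) :=
          Real.rpow_le_rpow (by positivity) hfinal (by positivity)
      _ = u := by
          rw [← Real.rpow_natCast u k, ← Real.rpow_mul hupos.le,
            mul_inv_cancel₀ hK.ne', Real.rpow_one]
  have hgoal : (n.choose (k - 1) : ℝ) * (v ^ (((k : ℝ) - 1) / (k : ℝ)))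
      ≤ (n.choose (k - 1) : ℝ) * u :=
    mul_le_mul_of_nonneg_left hrpow (le_of_lt (hchoosepos (k - 1) (by omega)))
  have huC : (n.choose (k - 1) : ℝ) * u = esym n (k - 1) x := by
    have hne : (n.choose (k - 1) : ℝ) ≠ 0 := (hchoosepos (k - 1) (by omega)).ne'
    rw [hu]
    show (n.choose (k - 1) : ℝ) * (esym n (k - 1) x / (n.choose (k - 1) : ℝ)) = _
    rw [mul_comm, div_mul_cancel₀ _ hne]
  calc (n.choose (k - 1) : ℝ) * ((esym n k x / (n.choose k : ℝ)) ^ (((k : ℝ) - 1) / (k : ℝ)))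
      = (n.choose (k - 1) : ℝ) * (v ^ (((k : ℝ) - 1) / (k : ℝ))) := rfl
    _ ≤ (n.choose (k - 1) : ℝ) * u := hgoal
    _ = esym n (k - 1) x := huC

lemma sum_esymDel (n m : ℕ) (x : Fin n → ℝ) :
    ∑ l : Fin n, esymDel n m x l = ((n - m : ℕ) : ℝ) * esym n m x := by
  unfold esymDel esym
  have hset : ∀ l : Fin n, (Finset.univ.erase l).powersetCard m
      = (Finset.univ.powersetCard m).filter (fun A => l ∉ A) := by
    intro l
    ext A
    simp only [Finset.mem_powersetCard, Finset.subset_erase, Finset.mem_filter,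
      Finset.subset_univ, true_and]
    tauto
  simp_rw [hset, Finset.sum_filter]
  rw [Finset.sum_comm, Finset.mul_sum]
  refine Finset.sum_congr rfl fun A hA => ?_
  have hAcard : A.card = m := (Finset.mem_powersetCard.mp hA).2
  rw [← Finset.sum_filter]
  have hfilter : Finset.univ.filter (fun l : Fin n => l ∉ A) = Aᶜ := by
    ext l; simp
  rw [hfilter, Finset.sum_const, Finset.card_compl, hAcard]
  simp [nsmul_eq_mul, Fintype.card_fin]


/-- Strict ellipticity of the `σ_k`-type operator. -/
theorem stmt_6 (n k : ℕ) (hk1 : 1 ≤ k) (hkn : k ≤ n - 1)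
    (lam η : Fin n → ℝ)
    (hη : ∀ i : Fin n, η i = (∑ j : Fin n, lam j) - lam i)
    (hG : η ∈ GardingCone n k) :
    ((n : ℝ) - 1) / (k : ℝ) * ((n : ℝ) - (k : ℝ) + 1) * (n.choose (k - 1) : ℝ) /
        ((n.choose k : ℝ) ^ (((k : ℝ) - 1) / (k : ℝ)))
      ≤ ∑ i : Fin n,
          (1 / (k : ℝ)) * (esym n k η) ^ ((1 : ℝ) / (k : ℝ) - 1) *
            ∑ l ∈ Finset.univ.erase i, esymDel n (k - 1) η l := by
  have hn2 : 2 ≤ n := by omega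
  have hkn' : k + 1 ≤ n := by omega
  have hG' : ∀ i : ℕ, 1 ≤ i → i ≤ k → 0 < esym n i η := hG
  have hE : 0 < esym n k η := hG' k hk1 le_rfl
  have hK : (0 : ℝ) < (k : ℝ) := by exact_mod_cast hk1
  have hN : (0 : ℝ) < (n : ℝ) - 1 := by
    have : (1 : ℝ) < (n : ℝ) := by exact_mod_cast hn2
    linarith
  have hCkpos : (0 : ℝ) < (n.choose k : ℝ) := by
    exact_mod_cast Nat.choose_pos (by omega : k ≤ n)
  have hCkm1pos : (0 : ℝ) < (n.choose (k - 1) : ℝ) := by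
    exact_mod_cast Nat.choose_pos (by omega : k - 1 ≤ n)
  set e : ℝ := ((k : ℝ) - 1) / (k : ℝ) with he
  set α : ℝ := (1 : ℝ) / (k : ℝ) - 1 with hα
  set E : ℝ := esym n k η with hEdef
  set F : ℝ := esym n (k - 1) η with hF
  have hEα : (0 : ℝ) < E ^ α := Real.rpow_pos_of_pos hE α
  -- the sum identity
  have hcast : ((n - (k - 1) : ℕ) : ℝ) = (n : ℝ) - (k : ℝ) + 1 := by
    have h1 : ((n - (k - 1) : ℕ) : ℝ) = (n : ℝ) - ((k - 1 : ℕ) : ℝ) :=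
      Nat.cast_sub (by omega)
    rw [h1, Nat.cast_sub hk1]
    push_cast
    ring
  have hS : ∑ l : Fin n, esymDel n (k - 1) η l = ((n : ℝ) - (k : ℝ) + 1) * F := by
    rw [sum_esymDel, hcast, hF]
  have hsum : ∑ i : Fin n, (1 / (k : ℝ)) * E ^ α *
        ∑ l ∈ Finset.univ.erase i, esymDel n (k - 1) η l
      = (1 / (k : ℝ)) * E ^ α * (((n : ℝ) - 1) * (((n : ℝ) - (k : ℝ) + 1) * F)) := by
    rw [← Finset.mul_sum]
    congr 1
    calc ∑ i : Fin n, ∑ l ∈ Finset.univ.erase i, esymDel n (k - 1) η l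
        = ∑ i : Fin n, ((∑ l : Fin n, esymDel n (k - 1) η l) - esymDel n (k - 1) η i) :=
          Finset.sum_congr rfl fun i _ => Finset.sum_erase_eq_sub (Finset.mem_univ i)
      _ = (n : ℝ) * (∑ l : Fin n, esymDel n (k - 1) η l)
            - ∑ l : Fin n, esymDel n (k - 1) η l := by
          rw [Finset.sum_sub_distrib, Finset.sum_const, Finset.card_univ, Fintype.card_fin,
            nsmul_eq_mul]
      _ = ((n : ℝ) - 1) * (((n : ℝ) - (k : ℝ) + 1) * F) := by rw [hS]; ring
  rw [hsum]
  -- Maclaurin bound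
  have hmac := maclaurin n k hk1 hkn' η hG'
  rw [← hEdef, ← hF, ← he] at hmac
  have hdivrpow : (E / (n.choose k : ℝ)) ^ e = E ^ e / ((n.choose k : ℝ)) ^ e :=
    Real.div_rpow hE.le hCkpos.le e
  rw [hdivrpow] at hmac
  -- key exponent identity
  have hαe : E ^ α * E ^ e = 1 := by
    rw [← Real.rpow_add hE]
    have : α + e = 0 := by
      rw [hα, he]
      field_simp
      ring
    rw [this, Real.rpow_zero]
  have hcoef : (0 : ℝ) ≤ (1 / (k : ℝ)) * E ^ α * (((n : ℝ) - 1)) := by positivity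
  have hmain : (1 / (k : ℝ)) * E ^ α * (((n : ℝ) - 1) *
        (((n : ℝ) - (k : ℝ) + 1) * ((n.choose (k - 1) : ℝ) * (E ^ e / ((n.choose k : ℝ)) ^ e))))
      ≤ (1 / (k : ℝ)) * E ^ α * (((n : ℝ) - 1) * (((n : ℝ) - (k : ℝ) + 1) * F)) := by
    have hnk1 : (0 : ℝ) ≤ (n : ℝ) - (k : ℝ) + 1 := by
      have : (k : ℝ) ≤ (n : ℝ) := by exact_mod_cast (by omega : k ≤ n)
      linarith
    apply mul_le_mul_of_nonneg_left _ (by positivity)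
    apply mul_le_mul_of_nonneg_left _ hN.le
    exact mul_le_mul_of_nonneg_left hmac hnk1
  refine le_trans (le_of_eq ?_) hmain
  -- LHS equality
  have hCkepos : (0 : ℝ) < ((n.choose k : ℝ)) ^ e := Real.rpow_pos_of_pos hCkpos e
  set EA : ℝ := E ^ α with hEA
  set EE : ℝ := E ^ e with hEE
  set Z : ℝ := ((n.choose k : ℝ)) ^ e with hZ
  linear_combination (-(((n : ℝ) - 1) * ((n : ℝ) - (k : ℝ) + 1) * (n.choose (k - 1) : ℝ) /
    ((k : ℝ) * Z))) * hαe
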